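/- Let k ≥ 2, let e, s be natural numbers, and let q be a square-free natural number with gcd(q, k) = 1. If (q, s) is a Waring pair, then (q^e, s+2) is a Waring pair. -/
import Mathlib

open Finset

/-- `p^(tau k p)` exactly divides `k`. -/
def tau (k p : ℕ) : ℕ := k.factorization p

def eta (k p : ℕ) : ℕ := if p = 2 ∧ 0 < tau k p then tau k p + 2 else tau k p + 1

/-- `R_k = ∏_{(p-1) ∣ k} p^(eta k p)` (all such primes satisfy `p ≤ k+1`). -/
def Rk (k : ℕ) : ℕ :=
  ∏ p ∈ (Finset.range (k + 2)).filter (fun p => p.Prime ∧ (p - 1) ∣ k), p ^ eta k p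

/-- The set of `k`-th power residues mod `q` that are coprime to `q`. -/
def Zset (k q : ℕ) : Set (ZMod q) := {a | (∃ t, t ^ k = a) ∧ IsUnit a}

/-- The `s`-fold sumset of `A ⊆ ℤ/qℤ`. -/
def sumset (q s : ℕ) (A : Set (ZMod q)) : Set (ZMod q) :=
  {x | ∃ f : Fin s → ZMod q, (∀ i, f i ∈ A) ∧ ∑ i, f i = x}

/-- `(q, s)` is a Waring pair. -/
def WaringPair (k q s : ℕ) : Prop :=
  ∀ A : Set (ZMod q), A ⊆ Zset k q → ((Zset k q).ncard : ℝ) / 2 < (A.ncard : ℝ) →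
    sumset q s A =
      {a : ZMod q |
        ZMod.castHom (Nat.gcd_dvd_right (Rk k) q) (ZMod (Nat.gcd (Rk k) q)) a
          = (s : ZMod (Nat.gcd (Rk k) q))}

/-! ### Elementary integer lemmas (binomial + Hensel lifting) -/

lemma add_pow_expand (t d : ℤ) (n : ℕ) :
    ∃ E : ℤ, (t + d) ^ (n + 1) = t ^ (n + 1) + (n + 1) * t ^ n * d + d ^ 2 * E := by
  induction n with
  | zero => exact ⟨0, by ring⟩
  | succ n ih =>
    obtain ⟨E, hE⟩ := ih
    refine ⟨(n + 1) * t ^ n + E * (t + d), ?_⟩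
    have h : (t + d) ^ (n + 1 + 1) = (t + d) ^ (n + 1) * (t + d) := by ring
    rw [h, hE]
    push_cast
    ring

/-- Hensel lifting for `k`-th powers modulo powers of `q`, when `gcd(q,k)=1`. -/
lemma hensel_lift (q k : ℕ) (hk : k ≠ 0) (x : ℤ) (hco : IsCoprime (q : ℤ) x)
    (hqk : IsCoprime (q : ℤ) (k : ℤ)) (t : ℤ) (h1 : (q : ℤ) ∣ t ^ k - x) :
    ∀ j : ℕ, ∃ T : ℤ, (q : ℤ) ^ (j + 1) ∣ T ^ k - x := by
  obtain ⟨k', rfl⟩ : ∃ k', k = k' + 1 :=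
    ⟨k - 1, (Nat.succ_pred_eq_of_pos (Nat.pos_of_ne_zero hk)).symm⟩
  intro j
  induction j with
  | zero => exact ⟨t, by simpa using h1⟩
  | succ j ih =>
    obtain ⟨T, hT⟩ := ih
    obtain ⟨m, hm⟩ := hT
    have hcoT : IsCoprime (q : ℤ) T := by
      have h1 : IsCoprime (q : ℤ) (T ^ (k' + 1)) := by
        have h2 : T ^ (k' + 1) = x + (q : ℤ) * ((q:ℤ) ^ j * m) := by
          linear_combination hm
        rw [h2]
        exact hco.add_mul_left_right _
      exact (IsCoprime.pow_right_iff (Nat.succ_pos k')).mp h1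
    have hK : IsCoprime (q : ℤ) (((k' : ℤ) + 1) * T ^ k') := by
      have := hqk.mul_right (hcoT.pow_right (n := k'))
      simpa [Nat.cast_add] using this
    obtain ⟨u, v, huv⟩ := hK
    set d : ℤ := (-m * v) * (q : ℤ) ^ (j + 1) with hd
    obtain ⟨E, hE⟩ := add_pow_expand T d k'
    refine ⟨T + d, ?_⟩
    have key : (T + d) ^ (k' + 1) - x
        = (q : ℤ) ^ (j + 1) * (m + ((k' : ℤ) + 1) * T ^ k' * (-m * v))
          + ((q : ℤ) ^ (j + 1)) ^ 2 * ((-m * v) ^ 2 * E) := by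
      rw [hE, hd]
      have hTx : T ^ (k' + 1) = x + (q : ℤ) ^ (j + 1) * m := by linear_combination hm
      rw [hTx]; ring
    rw [key]
    have h2 : m + ((k' : ℤ) + 1) * T ^ k' * (-m * v) = m * (u * q) := by
      linear_combination (-m) * huv
    refine dvd_add ?_ ?_
    · rw [h2]
      have h3 : ((q:ℤ)) ^ (j + 1 + 1) = (q : ℤ) ^ (j+1) * q := by ring
      rw [h3]
      exact mul_dvd_mul_left _ ⟨m * u, by ring⟩
    · have h3 : ((q:ℤ) ^ (j + 1)) ^ 2 = (q:ℤ) ^ (j + 1 + 1) * (q:ℤ) ^ j := by ring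
      rw [h3, mul_assoc]
      exact Dvd.intro _ rfl

/-! ### Finset fiber-counting lemmas -/

section fibers
variable {α β : Type*} [Fintype α] [DecidableEq α] [DecidableEq β] (f : α → β)

lemma card_fiberwise (S : Finset α) :
    S.card = ∑ b ∈ S.image f, (S.filter (fun x => f x = b)).card :=
  Finset.card_eq_sum_card_fiberwise (fun x hx => Finset.mem_image_of_mem f hx)

lemma card_le_image_mul {c : ℕ} (hc : ∀ b, (univ.filter (fun x => f x = b)).card = c)
    (S : Finset α) : S.card ≤ (S.image f).card * c := by
  rw [card_fiberwise f S]
  calc ∑ b ∈ S.image f, (S.filter (fun x => f x = b)).card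
      ≤ ∑ _b ∈ S.image f, c := by
        refine Finset.sum_le_sum fun b _ => ?_
        rw [← hc b]
        exact Finset.card_le_card (Finset.filter_subset_filter _ (Finset.subset_univ S))
    _ = (S.image f).card * c := by rw [Finset.sum_const, smul_eq_mul]

lemma exists_dense_fiber {c : ℕ}
    (S : Finset α) (h2 : (S.image f).card * c < 2 * S.card) :
    ∃ b, c < 2 * (S.filter (fun x => f x = b)).card := by
  by_contra hcon
  push_neg at hcon
  have h3 : 2 * S.card ≤ (S.image f).card * c := by
    rw [card_fiberwise f S, Finset.mul_sum]
    calc ∑ b ∈ S.image f, 2 * (S.filter (fun x => f x = b)).card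
        ≤ ∑ _b ∈ S.image f, c := Finset.sum_le_sum fun b _ => hcon b
      _ = (S.image f).card * c := by rw [Finset.sum_const, smul_eq_mul]
  omega

lemma card_preimage_finset {c : ℕ} (hsurj : Function.Surjective f)
    (hc : ∀ b, (univ.filter (fun x => f x = b)).card = c) (T : Finset β) :
    (univ.filter (fun x => f x ∈ T)).card = T.card * c := by
  rw [card_fiberwise f (univ.filter (fun x => f x ∈ T))]
  have himg : (univ.filter (fun x => f x ∈ T)).image f = T := by
    ext b
    simp only [Finset.mem_image, Finset.mem_filter, Finset.mem_univ, true_and]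
    constructor
    · rintro ⟨x, hx, rfl⟩; exact hx
    · intro hb; obtain ⟨x, rfl⟩ := hsurj b; exact ⟨x, hb, rfl⟩
  rw [himg]
  have h : ∀ b ∈ T, ((univ.filter (fun x => f x ∈ T)).filter (fun x => f x = b)).card = c := by
    intro b hb
    rw [← hc b]
    congr 1
    ext x
    simp only [Finset.mem_filter, Finset.mem_univ, true_and, and_iff_right_iff_imp]
    rintro rfl; exact hb
  rw [Finset.sum_congr rfl h, Finset.sum_const, smul_eq_mul]

end fibers

section fibereq
variable {α β : Type*} [Fintype α] [DecidableEq β] [AddCommGroup α] [AddCommGroup β]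

lemma fiber_card_const (f : α → β) (hadd : ∀ x y, f (x + y) = f x + f y)
    (hsub : ∀ x y, f (x - y) = f x - f y)
    (hsurj : Function.Surjective f) (b b' : β) :
    (univ.filter (fun x => f x = b)).card = (univ.filter (fun x => f x = b')).card := by
  classical
  obtain ⟨xb, rfl⟩ := hsurj b
  obtain ⟨xb', rfl⟩ := hsurj b'
  refine Finset.card_bij' (fun x _ => x - xb + xb') (fun x _ => x - xb' + xb) ?_ ?_ ?_ ?_
  · intro a ha
    simp only [Finset.mem_filter, Finset.mem_univ, true_and, hadd, hsub] at ha ⊢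
    rw [ha]; abel
  · intro a ha
    simp only [Finset.mem_filter, Finset.mem_univ, true_and, hadd, hsub] at ha ⊢
    rw [ha]; abel
  · intro a _; show a - xb + xb' - xb' + xb = a; abel
  · intro a _; show a - xb' + xb - xb + xb' = a; abel

end fibereq

/-! ### Facts about `Rk` and the gcd -/

lemma Rk_ne_zero (k : ℕ) : Rk k ≠ 0 := by
  unfold Rk
  refine Finset.prod_ne_zero_iff.mpr fun p hp => ?_
  simp only [Finset.mem_filter] at hp
  exact pow_ne_zero _ hp.2.1.pos.ne'

lemma prime_dvd_Rk {k p : ℕ} (hp : p.Prime) (hdvd : p ∣ Rk k) : (p - 1) ∣ k := by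
  unfold Rk at hdvd
  obtain ⟨p', hp', hpd⟩ := hp.prime.exists_mem_finset_dvd hdvd
  simp only [Finset.mem_filter] at hp'
  have h : p = p' := (Nat.prime_dvd_prime_iff_eq hp hp'.2.1).mp (hp.dvd_of_dvd_pow hpd)
  subst h
  exact hp'.2.2

lemma Rk_factorization_le {k p : ℕ} (hp : p.Prime) (hpk : ¬ p ∣ k) :
    (Rk k).factorization p ≤ 1 := by
  unfold Rk
  rw [Nat.factorization_prod (fun p' hp' => by
    simp only [Finset.mem_filter] at hp'
    exact pow_ne_zero _ hp'.2.1.pos.ne')]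
  rw [Finsupp.finset_sum_apply]
  have h : ∀ p' ∈ (Finset.range (k + 2)).filter (fun p => p.Prime ∧ (p - 1) ∣ k),
      (p' ^ eta k p').factorization p = if p' = p then eta k p' else 0 := by
    intro p' hp'
    simp only [Finset.mem_filter] at hp'
    rw [Nat.factorization_pow, hp'.2.1.factorization]
    simp [Finsupp.single_apply, mul_ite]
  rw [Finset.sum_congr rfl h, Finset.sum_ite_eq']
  split
  · next hmem =>
    have h0 : tau k p = 0 := Nat.factorization_eq_zero_of_not_dvd hpk
    simp [eta, h0]
  · exact Nat.zero_le 1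

lemma gcd_Rk_pow (k q e : ℕ) (hq : Squarefree q) (hqk : Nat.Coprime q k)
    (he : e ≠ 0) : Nat.gcd (Rk k) (q ^ e) = Nat.gcd (Rk k) q := by
  have hq0 : q ≠ 0 := hq.ne_zero
  have hqe0 : q ^ e ≠ 0 := pow_ne_zero _ hq0
  refine Nat.dvd_antisymm ?_ (Nat.dvd_gcd (Nat.gcd_dvd_left _ _)
    ((Nat.gcd_dvd_right _ _).trans (dvd_pow_self q he)))
  refine Nat.dvd_gcd (Nat.gcd_dvd_left _ _) ?_
  set d := Nat.gcd (Rk k) (q ^ e) with hd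
  have hd0 : d ≠ 0 := Nat.gcd_ne_zero_right hqe0
  have hdR : d ∣ Rk k := Nat.gcd_dvd_left _ _
  have hdq : d ∣ q ^ e := Nat.gcd_dvd_right _ _
  rw [← Nat.factorization_le_iff_dvd hd0 hq0]
  intro p
  by_cases hp : p.Prime
  · by_cases hpq : p ∣ q
    · have hpk : ¬ p ∣ k := fun hk => hp.ne_one ((hqk.coprime_dvd_left hpq).eq_one_of_dvd hk)
      have h1 : d.factorization p ≤ (Rk k).factorization p :=
        (Nat.factorization_le_iff_dvd hd0 (Rk_ne_zero k)).mpr hdR p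
      have h2 : 0 < q.factorization p := hp.factorization_pos_of_dvd hq0 hpq
      have h3 := Rk_factorization_le hp hpk
      omega
    · have h : ¬ p ∣ d := fun hpd => hpq (hp.dvd_of_dvd_pow (hpd.trans hdq))
      simp [Nat.factorization_eq_zero_of_not_dvd h]
  · simp [Nat.factorization_eq_zero_of_not_prime _ hp]

/-! ### casting lemmas -/

lemma cast_cond (m n : ℕ) [NeZero n] (h : m ∣ n) (a : ZMod n) (c : ℕ) :
    ZMod.castHom h (ZMod m) a = (c : ZMod m) ↔ (m : ℤ) ∣ (a.val : ℤ) - (c : ℤ) := by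
  rw [ZMod.castHom_apply, ← ZMod.natCast_val, ← Int.cast_natCast (a.val),
    ← Int.cast_natCast c, ZMod.intCast_eq_intCast_iff, Int.modEq_iff_dvd, dvd_sub_comm]

lemma squarefree_int_dvd {m : ℕ} (hm : Squarefree m) (M : ℤ)
    (h : ∀ p : ℕ, p.Prime → p ∣ m → (p : ℤ) ∣ M) : (m : ℤ) ∣ M := by
  rcases eq_or_ne M 0 with rfl | hM0
  · exact dvd_zero _
  have hm0 : m ≠ 0 := hm.ne_zero
  rw [Int.natCast_dvd]
  rw [← Nat.factorization_le_iff_dvd hm0 (Int.natAbs_ne_zero.mpr hM0)]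
  intro p
  by_cases hp : p.Prime
  · by_cases hpm : p ∣ m
    · have h1 : m.factorization p ≤ 1 := hm.natFactorization_le_one p
      have h2 : p ∣ M.natAbs := by
        rw [← Int.natCast_dvd]
        exact h p hp hpm
      have h3 : 0 < (M.natAbs).factorization p :=
        hp.factorization_pos_of_dvd (Int.natAbs_ne_zero.mpr hM0) h2
      omega
    · simp [Nat.factorization_eq_zero_of_not_dvd hpm]
  · simp [Nat.factorization_eq_zero_of_not_prime _ hp]

lemma zset_cast_one (k n m : ℕ) [NeZero n] (hk : k ≠ 0) (hm : m ∣ n) (hsq : Squarefree m)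
    (hpk : ∀ p : ℕ, p.Prime → p ∣ m → (p - 1) ∣ k) (a : ZMod n) (ha : a ∈ Zset k n) :
    ZMod.castHom hm (ZMod m) a = 1 := by
  obtain ⟨⟨t, ht⟩, hu⟩ := ha
  have h1 : (1 : ZMod m) = ((1 : ℕ) : ZMod m) := by norm_cast
  rw [h1, cast_cond m n hm a 1]
  refine squarefree_int_dvd hsq _ fun p hp hpm => ?_
  haveI : Fact p.Prime := ⟨hp⟩
  have hpn : p ∣ n := hpm.trans hm
  set ρ : ZMod n →+* ZMod p := ZMod.castHom hpn (ZMod p)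
  have hρa : ρ a = 1 := by
    have h1 : ρ a = (ρ t) ^ k := by rw [← ht, map_pow]
    have hunit : IsUnit (ρ t) := by
      have h2 : IsUnit ((ρ t) ^ k) := h1 ▸ hu.map ρ
      exact (isUnit_pow_iff hk).mp h2
    have hne : ρ t ≠ 0 := hunit.ne_zero
    obtain ⟨c, hc⟩ := hpk p hp hpm
    rw [h1, hc, pow_mul, ZMod.pow_card_sub_one_eq_one hne, one_pow]
  have h2 := (cast_cond p n hpn a 1).mp (by rw [hρa]; norm_cast)
  simpa using h2

/-! ### the structure of `Zset k (q^e)` -/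

lemma Zset_pow_eq (k q e : ℕ) (hq0 : q ≠ 0) (he : e ≠ 0) (hk : k ≠ 0)
    (hqk : Nat.Coprime q k) :
    haveI : NeZero q := ⟨hq0⟩
    Zset k (q ^ e) = (ZMod.castHom (dvd_pow_self q he) (ZMod q)) ⁻¹' (Zset k q) := by
  haveI : NeZero q := ⟨hq0⟩
  haveI : NeZero (q ^ e) := ⟨pow_ne_zero _ hq0⟩
  set π : ZMod (q ^ e) →+* ZMod q := ZMod.castHom (dvd_pow_self q he) (ZMod q) with hπ
  ext a
  constructor
  · rintro ⟨⟨t, rfl⟩, hu⟩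
    exact ⟨⟨π t, (map_pow π t k).symm⟩, hu.map π⟩
  · rintro ⟨⟨t, ht⟩, hu⟩
    have hπa : ((a.val : ℕ) : ZMod q) = π a := by
      rw [ZMod.natCast_val, hπ, ZMod.castHom_apply]
    have haa : ((a.val : ℕ) : ZMod (q ^ e)) = a := by
      rw [ZMod.natCast_val, ZMod.cast_id]
    have hval : (a.val).Coprime q := by
      rw [← ZMod.isUnit_iff_coprime, hπa]
      exact hu
    have hco : IsCoprime (q : ℤ) ((a.val : ℕ) : ℤ) := Nat.isCoprime_iff_coprime.mpr hval.symm
    have hqkZ : IsCoprime (q : ℤ) (k : ℤ) := Nat.isCoprime_iff_coprime.mpr hqk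
    have htt : ((t.val : ℕ) : ZMod q) = t := by rw [ZMod.natCast_val, ZMod.cast_id]
    have h1 : (q : ℤ) ∣ ((t.val : ℕ) : ℤ) ^ k - ((a.val : ℕ) : ℤ) := by
      rw [← ZMod.intCast_zmod_eq_zero_iff_dvd]
      push_cast
      rw [htt, hπa, ht, sub_self]
    obtain ⟨T, hT⟩ := hensel_lift q k hk _ hco hqkZ _ h1 (e - 1)
    rw [Nat.sub_add_cancel (Nat.one_le_iff_ne_zero.mpr he)] at hT
    refine ⟨⟨(T : ZMod (q ^ e)), ?_⟩, ?_⟩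
    · have h2 : (((T ^ k - (a.val : ℕ) : ℤ)) : ZMod (q ^ e)) = 0 := by
        rw [ZMod.intCast_zmod_eq_zero_iff_dvd]
        exact_mod_cast hT
      push_cast at h2
      rw [haa] at h2
      linear_combination h2
    · rw [← haa]
      exact (ZMod.isUnit_iff_coprime _ _).mpr (hval.pow_right e)

/-! ### trivial Waring pair modulo 1 -/

lemma waring_one (k m : ℕ) : WaringPair k 1 m := by
  intro A hA hcard
  have hne : A.Nonempty := by
    refine Set.nonempty_of_ncard_ne_zero fun h0 => ?_
    rw [h0] at hcard
    have : (0 : ℝ) ≤ ((Zset k 1).ncard : ℝ) / 2 := by positivity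
    simp at hcard
    linarith
  obtain ⟨a₀, ha₀⟩ := hne
  haveI : Subsingleton (ZMod (Nat.gcd (Rk k) 1)) := by
    rw [Nat.gcd_one_right]
    infer_instance
  ext x
  simp only [sumset, Set.mem_setOf_eq]
  constructor
  · intro _
    exact Subsingleton.elim _ _
  · intro _
    exact ⟨fun _ => a₀, fun _ => ha₀, Subsingleton.elim _ _⟩

/-! ### main theorem -/

theorem stmt7 (k : ℕ) (hk : 2 ≤ k) (e s q : ℕ) (hq : Squarefree q)
    (hqk : Nat.Coprime q k) (h : WaringPair k q s) :
    WaringPair k (q ^ e) (s + 2) := by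
  have hk0 : k ≠ 0 := by omega
  rcases eq_or_ne e 0 with rfl | he
  · rw [pow_zero]; exact waring_one k (s + 2)
  rcases eq_or_ne q 1 with rfl | hq1
  · rw [one_pow]; exact waring_one k (s + 2)
  have hq0 : q ≠ 0 := hq.ne_zero
  haveI : NeZero q := ⟨hq0⟩
  haveI : NeZero (q ^ e) := ⟨pow_ne_zero _ hq0⟩
  classical
  intro A hA hcard
  set π : ZMod (q ^ e) →+* ZMod q := ZMod.castHom (dvd_pow_self q he) (ZMod q) with hπ
  have hsurj : Function.Surjective π := by
    intro b
    exact ⟨((b.val : ℕ) : ZMod (q ^ e)), by rw [map_natCast, ZMod.natCast_val, ZMod.cast_id]⟩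
  set g := Nat.gcd (Rk k) q with hg
  have hGg : Nat.gcd (Rk k) (q ^ e) = g := gcd_Rk_pow k q e hq hqk he
  have hgq : g ∣ q := Nat.gcd_dvd_right _ _
  have hgsq : Squarefree g := hq.squarefree_of_dvd hgq
  have hgprime : ∀ p, p.Prime → p ∣ g → (p - 1) ∣ k := fun p hp hpg =>
    prime_dvd_Rk hp (hpg.trans (Nat.gcd_dvd_left _ _))
  have hgn : g ∣ q ^ e := hgq.trans (dvd_pow_self q he)
  have hZ : Zset k (q ^ e) = π ⁻¹' (Zset k q) := Zset_pow_eq k q e hq0 he hk0 hqk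
  -- fibers
  set c := (univ.filter (fun x => π x = (0 : ZMod q))).card with hc
  have hfib : ∀ b, (univ.filter (fun x => π x = b)).card = c := fun b =>
    fiber_card_const (fun x => π x) (map_add π) (map_sub π) hsurj b 0
  have hc1 : 1 ≤ c := by
    rw [hc]
    refine Finset.card_pos.mpr ⟨0, ?_⟩
    simp [map_zero]
  -- finsets
  have hAfin := A.toFinite
  set FA := hAfin.toFinset with hFA
  have hFAcard : A.ncard = FA.card := Set.ncard_eq_toFinset_card _ _
  set B := π '' A with hB
  have hBfin := B.toFinite
  have hBim : hBfin.toFinset = FA.image π := by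
    ext x
    simp [hFA, Set.Finite.mem_toFinset, hB]; try tauto
  have hBcard : B.ncard = (FA.image π).card := by
    rw [Set.ncard_eq_toFinset_card _ hBfin, hBim]
  have hZqfin := (Zset k q).toFinite
  set FZq := hZqfin.toFinset with hFZq
  have hZqcard : (Zset k q).ncard = FZq.card := Set.ncard_eq_toFinset_card _ _
  have hZncard : (Zset k (q ^ e)).ncard = FZq.card * c := by
    have h1 : Zset k (q ^ e) = ↑(univ.filter (fun x => π x ∈ FZq)) := by
      rw [hZ]
      ext x
      simp [hFZq, Set.Finite.mem_toFinset, Zset]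
    rw [h1, Set.ncard_coe_finset, card_preimage_finset π hsurj hfib FZq]
  -- numeric
  have hnat : FZq.card * c < 2 * FA.card := by
    rw [div_lt_iff₀ (by norm_num : (0:ℝ) < 2)] at hcard
    have h1 : ((Zset k (q ^ e)).ncard : ℝ) < (A.ncard : ℝ) * 2 := hcard
    have h2 : (Zset k (q ^ e)).ncard < A.ncard * 2 := by exact_mod_cast h1
    rw [hZncard, hFAcard] at h2
    omega
  have hBsub : B ⊆ Zset k q := by
    rintro _ ⟨x, hx, rfl⟩
    have h1 := hA hx
    rw [hZ] at h1
    exact h1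
  have hBbig : ((Zset k q).ncard : ℝ) / 2 < (B.ncard : ℝ) := by
    have h1 : FA.card ≤ (FA.image π).card * c := card_le_image_mul π hfib FA
    have h2 : FZq.card * c < (2 * (FA.image π).card) * c := by
      calc FZq.card * c < 2 * FA.card := hnat
        _ ≤ 2 * ((FA.image π).card * c) := by omega
        _ = (2 * (FA.image π).card) * c := by ring
    have h3 : FZq.card < 2 * (FA.image π).card := Nat.lt_of_mul_lt_mul_right h2
    rw [div_lt_iff₀ (by norm_num : (0:ℝ) < 2), hZqcard, hBcard]
    exact_mod_cast by omega
  have hsum := h B hBsub hBbig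
  -- dense fiber
  have himle : (FA.image π).card ≤ FZq.card := by
    refine Finset.card_le_card fun b hb => ?_
    rw [← hBim] at hb
    rw [Set.Finite.mem_toFinset] at hb ⊢
    exact hBsub hb
  obtain ⟨b₀, hb₀⟩ := exists_dense_fiber π FA
    (lt_of_le_of_lt (Nat.mul_le_mul_right c himle) hnat)
  set F : Set (ZMod (q ^ e)) := A ∩ π ⁻¹' {b₀} with hF
  have hFcard : F.ncard = (FA.filter (fun x => π x = b₀)).card := by
    have h1 : F = ↑(FA.filter (fun x => π x = b₀)) := by
      ext x
      simp [hF, hFA, Set.Finite.mem_toFinset]; try tauto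
      try tauto
    rw [h1, Set.ncard_coe_finset]
  have hFdense : c < 2 * F.ncard := by rw [hFcard]; exact hb₀
  have hFne : F.Nonempty := Set.nonempty_of_ncard_ne_zero (by omega)
  obtain ⟨w₀, hw₀⟩ := hFne
  have hb₀Z : b₀ ∈ Zset k q := hBsub ⟨w₀, hw₀.1, hw₀.2⟩
  -- cast-one facts
  have hcast1 : ∀ a ∈ Zset k (q ^ e), ZMod.castHom hgn (ZMod g) a = 1 := fun a ha =>
    zset_cast_one k (q ^ e) g hk0 hgn hgsq hgprime a ha
  have hcastb₀ : ZMod.castHom hgq (ZMod g) b₀ = 1 :=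
    zset_cast_one k q g hk0 hgq hgsq hgprime b₀ hb₀Z
  have hcomp : ∀ x : ZMod (q ^ e),
      ZMod.castHom hgq (ZMod g) (π x) = ZMod.castHom hgn (ZMod g) x := by
    intro x
    rw [hπ, ← RingHom.comp_apply, ZMod.castHom_comp]
  have hcond : ∀ (x : ZMod (q ^ e)) (cn : ℕ),
      (ZMod.castHom (Nat.gcd_dvd_right (Rk k) (q ^ e)) (ZMod (Nat.gcd (Rk k) (q ^ e))) x
        = ((cn : ℕ) : ZMod (Nat.gcd (Rk k) (q ^ e))))
      ↔ ZMod.castHom hgn (ZMod g) x = ((cn : ℕ) : ZMod g) := by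
    intro x cn
    rw [cast_cond, cast_cond, hGg]
  ext x
  simp only [sumset, Set.mem_setOf_eq]
  constructor
  · rintro ⟨f, hf, rfl⟩
    rw [show ((↑(s + 2) : ZMod (Nat.gcd (Rk k) (q ^ e)))) = (((s + 2 : ℕ) : ℕ) : ZMod (Nat.gcd (Rk k) (q ^ e))) from rfl]
    rw [hcond _ (s + 2)]
    rw [map_sum]
    have h1 : ∀ i ∈ (univ : Finset (Fin (s + 2))),
        ZMod.castHom hgn (ZMod g) (f i) = 1 := fun i _ => hcast1 (f i) (hA (hf i))
    rw [Finset.sum_congr rfl h1, Finset.sum_const, Finset.card_univ, Fintype.card_fin,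
      nsmul_eq_mul, mul_one]
  · intro hx
    have hx' : ZMod.castHom hgn (ZMod g) x = ((s + 2 : ℕ) : ZMod g) :=
      (hcond x (s + 2)).mp hx
    set y : ZMod q := π x - b₀ - b₀ with hy
    have hy' : ZMod.castHom hgq (ZMod g) y = ((s : ℕ) : ZMod g) := by
      rw [hy, map_sub, map_sub, hcomp, hx', hcastb₀]
      push_cast
      ring
    have hymem : y ∈ sumset q s B := by
      rw [hsum]
      exact hy'
    obtain ⟨f, hfB, hfsum⟩ := hymem
    have hlift : ∀ i, ∃ w, w ∈ A ∧ π w = f i := fun i => hfB i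
    choose af hafA hafπ using hlift
    set c' : ZMod (q ^ e) := x - ∑ i, af i with hc'
    have hπc' : π c' = b₀ + b₀ := by
      rw [hc', map_sub, map_sum]
      have h1 : ∑ i, π (af i) = y := by
        rw [← hfsum]
        exact Finset.sum_congr rfl fun i _ => hafπ i
      rw [h1, hy]
      ring
    have hFsub : F ⊆ π ⁻¹' {b₀} := Set.inter_subset_right
    set F' : Set (ZMod (q ^ e)) := (fun w => c' - w) '' F with hF'
    have hF'sub : F' ⊆ π ⁻¹' {b₀} := by
      rintro _ ⟨w, hw, rfl⟩
      have h1 : π w = b₀ := hFsub hw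
      simp only [Set.mem_preimage, Set.mem_singleton_iff, map_sub, hπc', h1]
      ring
    have hF'card : F'.ncard = F.ncard :=
      Set.ncard_image_of_injective _ sub_right_injective
    have hfibncard : (π ⁻¹' {b₀} : Set (ZMod (q ^ e))).ncard = c := by
      have h1 : (π ⁻¹' {b₀} : Set (ZMod (q ^ e))) = ↑(univ.filter (fun x => π x = b₀)) := by
        ext z; simp
      rw [h1, Set.ncard_coe_finset, hfib]
    have hinter : (F ∩ F').Nonempty := by
      by_contra hcon
      rw [Set.not_nonempty_iff_eq_empty] at hcon
      have h1 := Set.ncard_union_add_ncard_inter F F' F.toFinite F'.toFinite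
      have h2 : (F ∪ F').ncard ≤ c := by
        rw [← hfibncard]
        exact Set.ncard_le_ncard (Set.union_subset hFsub hF'sub) (Set.toFinite _)
      rw [hcon, Set.ncard_empty, add_zero] at h1
      omega
    obtain ⟨u, huF, huF'⟩ := hinter
    obtain ⟨w, hwF, hweq⟩ := huF'
    have huw : u + w = c' := by rw [← hweq]; ring
    refine ⟨Fin.snoc (Fin.snoc af u) w, ?_, ?_⟩
    · intro i
      refine Fin.lastCases ?_ (fun j => ?_) i
      · rw [Fin.snoc_last]; exact hwF.1
      · rw [Fin.snoc_castSucc]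
        refine Fin.lastCases ?_ (fun j' => ?_) j
        · rw [Fin.snoc_last]; exact huF.1
        · rw [Fin.snoc_castSucc]; exact hafA j'
    · rw [Fin.sum_univ_castSucc]
      simp only [Fin.snoc_castSucc, Fin.snoc_last]
      rw [Fin.sum_univ_castSucc]
      simp only [Fin.snoc_castSucc, Fin.snoc_last]
      have h1 := huw
      rw [hc'] at h1
      linear_combination h1
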